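/- Let V be a finite set of points in ℝ² contained in the closed annulus {x : 2 ≤ ‖x‖ ≤ 2.52} with exactly 7 points and pairwise distances at least 2. Then ∑_{v ∈ V} L(‖v‖/2) < 6 (strict inequality), where L(h) = (1.26 - h)/0.26 for h ≤ 1.26 and 0 otherwise. -/

import Mathlib

noncomputable def Ltrunc (h : ℝ) : ℝ :=
  if h ≤ 1.26 then (1.26 - h) / 0.26 else 0

open Real Complex

def toC (v : EuclideanSpace ℝ (Fin 2)) : ℂ := ⟨v 0, v 1⟩

lemma abs_toC (v : EuclideanSpace ℝ (Fin 2)) : ‖(toC v)‖ = ‖v‖ := by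
  rw [EuclideanSpace.norm_eq, Complex.norm_def, Complex.normSq_apply]
  congr 1
  simp [toC, Fin.sum_univ_two, Real.norm_eq_abs, sq_abs]
  ring

lemma toC_sub (u v : EuclideanSpace ℝ (Fin 2)) : toC (u - v) = toC u - toC v := by
  apply Complex.ext <;> simp [toC]

lemma abs_sub_sq' (z w : ℂ) : (‖(z - w)‖)^2 =
    (‖z‖)^2 + (‖w‖)^2 - 2*(z.re*w.re + z.im*w.im) := by
  rw [Complex.sq_norm, Complex.sq_norm, Complex.sq_norm]
  simp [Complex.normSq_apply]
  ring

lemma cos_diff (z w : ℂ) (hz : z ≠ 0) (hw : w ≠ 0) :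
    Real.cos (w.arg - z.arg) = (w.re * z.re + w.im * z.im) / (‖w‖ * ‖z‖) := by
  have hz' : ‖z‖ ≠ 0 := by simpa using hz
  have hw' : ‖w‖ ≠ 0 := by simpa using hw
  rw [Real.cos_sub, Complex.cos_arg hz, Complex.cos_arg hw, Complex.sin_arg, Complex.sin_arg]
  field_simp

lemma key0 (a b : ℝ) (ha : 2 ≤ a) (ha' : a ≤ 2.52) (hb : 2 ≤ b) (hb' : b ≤ 2.52) :
    (a^2 + b^2 - 4) / (2*a*b) ≤ 1 - ((0.48 - (4/13)*(a-2)) + (0.48 - (4/13)*(b-2)))^2 / 2 := by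
  rw [div_le_iff₀ (by nlinarith : (0:ℝ) < 2*a*b)]
  nlinarith [mul_nonneg (sub_nonneg.2 ha) (sub_nonneg.2 hb),
    mul_nonneg (sub_nonneg.2 ha') (sub_nonneg.2 hb'),
    mul_nonneg (sub_nonneg.2 ha) (sub_nonneg.2 hb'),
    mul_nonneg (sub_nonneg.2 ha') (sub_nonneg.2 hb),
    sq_nonneg (a-b), sq_nonneg (a+b-4), sq_nonneg (a+b-5.04)]

lemma key (a b δ : ℝ) (ha : 2 ≤ a) (ha' : a ≤ 2.52) (hb : 2 ≤ b) (hb' : b ≤ 2.52)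
    (hδ : 0 ≤ δ) (hcos : Real.cos δ ≤ (a^2 + b^2 - 4) / (2*a*b)) :
    (0.48 - (4/13)*(a-2)) + (0.48 - (4/13)*(b-2)) ≤ δ := by
  have hpi := Real.pi_gt_d6
  have hs1 : (0.48 - (4/13)*(a-2)) + (0.48 - (4/13)*(b-2)) ≤ 0.96 := by linarith
  by_cases hπ : δ ≤ π
  · by_contra hcon
    push_neg at hcon
    have h1 : Real.cos ((0.48 - (4/13)*(a-2)) + (0.48 - (4/13)*(b-2))) < Real.cos δ :=
      Real.cos_lt_cos_of_nonneg_of_le_pi hδ (by linarith) hcon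
    have h2 : 1 - ((0.48 - (4/13)*(a-2)) + (0.48 - (4/13)*(b-2)))^2/2 ≤
        Real.cos ((0.48 - (4/13)*(a-2)) + (0.48 - (4/13)*(b-2))) :=
      Real.one_sub_sq_div_two_le_cos
    have h3 := key0 a b ha ha' hb hb'
    linarith
  · push_neg at hπ
    linarith


theorem L_sum_lt_six_of_seven (V : Finset (EuclideanSpace ℝ (Fin 2)))
    (hcard : V.card = 7)
    (hann : ∀ v ∈ V, 2 ≤ ‖v‖ ∧ ‖v‖ ≤ 2.52)
    (hsep : ∀ u ∈ V, ∀ v ∈ V, u ≠ v → 2 ≤ ‖u - v‖) :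
    (∑ v ∈ V, Ltrunc (‖v‖ / 2)) < 6 := by
  classical
  -- cosine bound for pairs
  have hkey : ∀ u ∈ V, ∀ w ∈ V, u ≠ w →
      Real.cos ((toC w).arg - (toC u).arg) ≤ (‖u‖^2 + ‖w‖^2 - 4) / (2*‖u‖*‖w‖) := by
    intro u hu w hw hne
    obtain ⟨hu2, hu2'⟩ := hann u hu
    obtain ⟨hw2, hw2'⟩ := hann w hw
    have habsu := abs_toC u
    have habsw := abs_toC w
    have hzu : toC u ≠ 0 := by
      intro h; rw [h, norm_zero] at habsu; linarith
    have hzw : toC w ≠ 0 := by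
      intro h; rw [h, norm_zero] at habsw; linarith
    rw [cos_diff _ _ hzu hzw, habsu, habsw]
    have hd : 2 ≤ ‖u - w‖ := hsep u hu w hw hne
    have hd2 : ‖u - w‖^2 = ‖u‖^2 + ‖w‖^2
        - 2*((toC u).re*(toC w).re + (toC u).im*(toC w).im) := by
      rw [← abs_toC (u - w), toC_sub, abs_sub_sq', habsu, habsw]
    have h4 : (4:ℝ) ≤ ‖u - w‖^2 := by nlinarith
    rw [div_le_div_iff₀ (by positivity) (by positivity)]
    have hab : (0:ℝ) ≤ ‖u‖ * ‖w‖ := by positivity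
    have hP : 2*((toC w).re*(toC u).re + (toC w).im*(toC u).im) ≤ ‖u‖^2 + ‖w‖^2 - 4 := by
      nlinarith
    nlinarith [mul_le_mul_of_nonneg_right hP hab]
  -- injectivity of arg on V
  have hinj : Set.InjOn (fun x => (toC x).arg) V := by
    intro u hu w hw he
    by_contra hne
    have h1 := hkey u hu w hw hne
    simp only at he
    rw [he, sub_self, Real.cos_zero] at h1
    obtain ⟨hu2, hu2'⟩ := hann u hu
    obtain ⟨hw2, hw2'⟩ := hann w hw
    rw [le_div_iff₀ (by positivity)] at h1
    nlinarith [mul_nonneg (sub_nonneg.2 hu2') (sub_nonneg.2 hw2),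
      mul_nonneg (sub_nonneg.2 hw2') (sub_nonneg.2 hu2)]
  -- enumeration sorted by argument
  have hA : (V.image (fun x => (toC x).arg)).card = 7 := by
    rw [Finset.card_image_of_injOn hinj, hcard]
  set e := (V.image (fun x => (toC x).arg)).orderIsoOfFin hA with he
  have H : ∀ i : Fin 7, ∃ x ∈ V, (toC x).arg = (e i : ℝ) :=
    fun i => Finset.mem_image.mp (e i).2
  choose v hv harg using H
  have hvinj : Function.Injective v := by
    intro i j h
    apply e.injective
    apply Subtype.ext
    rw [← harg i, ← harg j, h]
  have hmono : ∀ i j : Fin 7, i ≤ j → (toC (v i)).arg ≤ (toC (v j)).arg := by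
    intro i j h
    rw [harg i, harg j]
    exact_mod_cast e.monotone h
  have himg : Finset.image v Finset.univ = V := by
    apply Finset.eq_of_subset_of_card_le
    · intro x hx
      obtain ⟨i, _, rfl⟩ := Finset.mem_image.mp hx
      exact hv i
    · rw [hcard, Finset.card_image_of_injective _ hvinj, Finset.card_univ, Fintype.card_fin]
  rw [← himg, Finset.sum_image (fun i _ j _ h => hvinj h)]
  -- gap bounds
  have hgap : ∀ i j : Fin 7, i ≠ j → ∀ δ : ℝ, 0 ≤ δ →
      Real.cos δ = Real.cos ((toC (v j)).arg - (toC (v i)).arg) →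
      (0.32 + 0.16 * Ltrunc (‖v i‖/2)) + (0.32 + 0.16 * Ltrunc (‖v j‖/2)) ≤ δ := by
    intro i j hij δ hδ hcos
    obtain ⟨h2, h2'⟩ := hann (v i) (hv i)
    obtain ⟨h3, h3'⟩ := hann (v j) (hv j)
    have hne : v i ≠ v j := fun h => hij (hvinj h)
    have hL1 : 0.32 + 0.16 * Ltrunc (‖v i‖/2) = 0.48 - (4/13)*(‖v i‖-2) := by
      rw [Ltrunc, if_pos (by linarith : ‖v i‖/2 ≤ 1.26)]; ring
    have hL2 : 0.32 + 0.16 * Ltrunc (‖v j‖/2) = 0.48 - (4/13)*(‖v j‖-2) := by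
      rw [Ltrunc, if_pos (by linarith : ‖v j‖/2 ≤ 1.26)]; ring
    rw [hL1, hL2]
    apply key _ _ δ h2 h2' h3 h3' hδ
    rw [hcos]
    exact hkey (v i) (hv i) (v j) (hv j) hne
  -- the seven gaps
  have g0 := hgap 0 1 (by decide) _ (sub_nonneg.2 (hmono 0 1 (by decide))) rfl
  have g1 := hgap 1 2 (by decide) _ (sub_nonneg.2 (hmono 1 2 (by decide))) rfl
  have g2 := hgap 2 3 (by decide) _ (sub_nonneg.2 (hmono 2 3 (by decide))) rfl
  have g3 := hgap 3 4 (by decide) _ (sub_nonneg.2 (hmono 3 4 (by decide))) rfl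
  have g4 := hgap 4 5 (by decide) _ (sub_nonneg.2 (hmono 4 5 (by decide))) rfl
  have g5 := hgap 5 6 (by decide) _ (sub_nonneg.2 (hmono 5 6 (by decide))) rfl
  have hr0 := Complex.neg_pi_lt_arg (toC (v 0))
  have hr6 := Complex.arg_le_pi (toC (v 6))
  have g6 := hgap 0 6 (by decide) (2*Real.pi - ((toC (v 6)).arg - (toC (v 0)).arg))
    (by linarith [Real.pi_pos]) (Real.cos_two_pi_sub _)
  have hpi := Real.pi_lt_d2
  rw [Fin.sum_univ_seven]
  linarith
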